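/- Every extended transitive 2-player symmetric game has at least one (f, ε)-self-play sequence for every ε > 0, and every such sequence is finite. More precisely, if (x_n, y_n)_{0≤n≤2N} is an (f, ε)-self-play sequence in an extended transitive game with bounded function Φ and constant δ_ε > 0, then Φ(x_{2n}) > Φ(x_0) + n·δ_ε for all 1 ≤ n ≤ N, and no infinite such sequence exists. -/
import Mathlib


/-- In an extended transitive 2-player symmetric game (with payoff u, bounded
skill Φ and margin δε > 0 for level ε > 0), (u,ε)-self-play sequences exist
(e.g. the empty one generated by any point), the skill strictly accumulates
along any such sequence: Φ(z_n) > Φ(z_0) + n·δε for 1 ≤ n ≤ N, and no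
infinite (u,ε)-self-play sequence exists. A self-play sequence of size 2N
generated by (z_n) is encoded by the improvement property
u(z_{n+1}, z_n) > u(z_n, z_n) + ε for all n < N. -/
theorem stmt_7 {S : Type*} [Nonempty S] (u : S → S → ℝ) (Φ : S → ℝ)
    (hΦbdd : ∃ M : ℝ, ∀ x, |Φ x| ≤ M)
    (ε δε : ℝ) (hε : 0 < ε) (hδε : 0 < δε)
    (htrans : ∀ x y : S, u y x - u x x > ε → Φ y - Φ x > δε) :
    (∃ (N : ℕ) (z : ℕ → S), ∀ n < N, u (z (n + 1)) (z n) > u (z n) (z n) + ε) ∧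
      (∀ (N : ℕ) (z : ℕ → S),
        (∀ n < N, u (z (n + 1)) (z n) > u (z n) (z n) + ε) →
        ∀ n, 1 ≤ n → n ≤ N → Φ (z n) > Φ (z 0) + n * δε) ∧
      ¬ ∃ z : ℕ → S, ∀ n : ℕ, u (z (n + 1)) (z n) > u (z n) (z n) + ε := by
  have key : ∀ (N : ℕ) (z : ℕ → S),
      (∀ n < N, u (z (n + 1)) (z n) > u (z n) (z n) + ε) →
      ∀ n, 1 ≤ n → n ≤ N → Φ (z n) > Φ (z 0) + n * δε := by
    intro N z h n hn1 hnN
    induction n with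
    | zero => omega
    | succ k ih =>
      have hstep : Φ (z (k + 1)) - Φ (z k) > δε := by
        apply htrans
        have := h k (by omega)
        linarith
      rcases Nat.eq_zero_or_pos k with hk | hk
      · subst hk; push_cast; linarith
      · have := ih hk (by omega)
        push_cast
        push_cast at this
        linarith
  refine ⟨⟨0, fun _ => Classical.arbitrary S, fun n hn => by omega⟩, key, ?_⟩
  rintro ⟨z, hz⟩
  obtain ⟨M, hM⟩ := hΦbdd
  obtain ⟨n, hn⟩ := exists_nat_gt ((2 * M) / δε)
  have hn1 : 1 ≤ n + 1 := by omega
  have h := key (n + 1) z (fun m _ => hz m) (n + 1) hn1 le_rfl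
  have h1 := (abs_le.mp (hM (z (n + 1)))).2
  have h2 := (abs_le.mp (hM (z 0))).1
  have : (n : ℝ) + 1 > (2 * M) / δε := by
    have : ((n : ℝ)) > (2 * M) / δε := hn
    linarith
  have hlt : 2 * M < ((n : ℝ) + 1) * δε := by
    rw [gt_iff_lt, div_lt_iff₀ hδε] at this
    linarith
  push_cast at h
  linarith
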